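/- The inhomogeneous Markov chain of path-integral Monte Carlo quantum annealing is strongly ergodic if the annealing schedule satisfies T1(t) ≥ R·L1 / log(t+2) for all t ≥ 0, and the limiting distribution r is supported on the set S1^min of global minima of F1, with r(x) = exp(−F0(x)/T0) / Σ_{y∈S1^min} exp(−F0(y)/T0) for x ∈ S1^min and r(x) = 0 otherwise. -/

import Mathlib

open Finset Filter

namespace QAPaper

variable {S : Type*}

/-- A probability distribution on the finite state space `S`, viewed as a vector. -/
def IsProbVec [Fintype S] (p : S → ℝ) : Prop :=
  (∀ x, 0 ≤ p x) ∧ ∑ x, p x = 1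

/-- The ℓ¹ norm distance `‖p - p'‖ = ∑ₓ |p(x) - p'(x)|`. -/
noncomputable def dist1 [Fintype S] (p p' : S → ℝ) : ℝ := ∑ x, |p x - p' x|

/-- A column-stochastic matrix: entries nonnegative, columns sum to one. -/
def IsStochastic [Fintype S] (G : Matrix S S ℝ) : Prop :=
  (∀ y x, 0 ≤ G y x) ∧ ∀ x, ∑ y, G y x = 1

/-- `prodG G t t0 = G (t-1) * G (t-2) * ⋯ * G t0`. -/
noncomputable def prodG [Fintype S] [DecidableEq S] (G : ℕ → Matrix S S ℝ) (t t0 : ℕ) :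
    Matrix S S ℝ :=
  (((List.range (t - t0)).map fun k => G (t0 + k)).reverse).prod

/-- Weak ergodicity: the distribution forgets its initial condition. -/
def WeaklyErgodic [Fintype S] [DecidableEq S] (G : ℕ → Matrix S S ℝ) : Prop :=
  ∀ t0 : ℕ, ∀ ε > (0 : ℝ), ∃ T : ℕ, ∀ t ≥ T,
    ∀ p0 p0' : S → ℝ, IsProbVec p0 → IsProbVec p0' →
      dist1 ((prodG G t t0).mulVec p0) ((prodG G t t0).mulVec p0') ≤ ε

/-- Strong ergodicity towards a fixed distribution `r`. -/
def StronglyErgodicTo [Fintype S] [DecidableEq S] (G : ℕ → Matrix S S ℝ) (r : S → ℝ) : Prop :=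
  ∀ t0 : ℕ, ∀ ε > (0 : ℝ), ∃ T : ℕ, ∀ t ≥ T,
    ∀ p0 : S → ℝ, IsProbVec p0 → dist1 ((prodG G t t0).mulVec p0) r ≤ ε

/-- Strong ergodicity. -/
def StronglyErgodic [Fintype S] [DecidableEq S] (G : ℕ → Matrix S S ℝ) : Prop :=
  ∃ r : S → ℝ, IsProbVec r ∧ StronglyErgodicTo G r

/-- The coefficient of ergodicity `α(G)`. -/
noncomputable def ergCoeff [Fintype S] [Nonempty S] (G : Matrix S S ℝ) : ℝ :=
  1 - Finset.univ.inf' Finset.univ_nonempty fun p : S × S => ∑ z, min (G z p.1) (G z p.2)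

/-- A generation probability: symmetric, vanishing on the diagonal, columns summing
to one, and irreducible. -/
structure IsGenProb [Fintype S] (P : S → S → ℝ) : Prop where
  symm : ∀ x y, P y x = P x y
  nonneg : ∀ x y, 0 ≤ P y x
  diag_zero : ∀ x, P x x = 0
  sum_one : ∀ x, ∑ y, P y x = 1
  irreducible : ∀ x y : S, ∃ n > 0, ∃ z : ℕ → S,
    z 0 = x ∧ z n = y ∧ ∀ k < n, 0 < P (z (k + 1)) (z k)

/-- An acceptance function: monotone increasing, valued in `[0,1]`,
with `g (1/u) = g u / u`. -/
structure IsAcceptFn (g : ℝ → ℝ) : Prop where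
  mono : MonotoneOn g (Set.Ici (0 : ℝ))
  maps : ∀ u : ℝ, 0 ≤ u → g u ∈ Set.Icc (0 : ℝ) 1
  ratio : ∀ u : ℝ, 0 < u → g (1 / u) = g u / u

/-- Partition function `Z(t)`. -/
noncomputable def Zfun [Fintype S] (F0 F1 : S → ℝ) (T0 : ℝ) (T1 : ℕ → ℝ) (t : ℕ) : ℝ :=
  ∑ x, Real.exp (-(F0 x) / T0 - F1 x / T1 t)

/-- Time-dependent Boltzmann distribution `q(x;t)`. -/
noncomputable def qB [Fintype S] (F0 F1 : S → ℝ) (T0 : ℝ) (T1 : ℕ → ℝ) (t : ℕ) (x : S) : ℝ :=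
  Real.exp (-(F0 x) / T0 - F1 x / T1 t) / Zfun F0 F1 T0 T1 t

/-- Transition matrix built from a generation probability `P` and an
acceptance probability `A`. -/
noncomputable def GmatOf [Fintype S] [DecidableEq S] (P : S → S → ℝ) (A : ℕ → S → S → ℝ)
    (t : ℕ) : Matrix S S ℝ :=
  Matrix.of fun y x => if y = x then 1 - ∑ z, P z x * A t z x else P y x * A t y x

/-- Transition matrix of path-integral Monte Carlo quantum annealing. -/
noncomputable def Gpimc [Fintype S] [DecidableEq S] (P : S → S → ℝ) (g : ℝ → ℝ)
    (F0 F1 : S → ℝ) (T0 : ℝ) (T1 : ℕ → ℝ) : ℕ → Matrix S S ℝ :=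
  GmatOf P fun t y x => g (qB F0 F1 T0 T1 t y / qB F0 F1 T0 T1 t x)

/-- The set `S_m` of local maxima of `F1` with respect to `P`. -/
def Sm [Fintype S] (P : S → S → ℝ) (F1 : S → ℝ) : Set S :=
  {x | ∀ y, 0 < P y x → F1 y ≤ F1 x}

/-- `x` can reach `y` in exactly `n` elementary transitions. -/
def ReachIn (P : S → S → ℝ) (n : ℕ) (x y : S) : Prop :=
  ∃ f : ℕ → S, f 0 = x ∧ f n = y ∧ ∀ k < n, 0 < P (f (k + 1)) (f k)

/-- `d(y,x)`: the minimum number of transitions needed to go from `x` to `y`. -/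
noncomputable def dSteps (P : S → S → ℝ) (x y : S) : ℕ :=
  sInf {n | ReachIn P n x y}

/-- `R = min { max { d(y,x) | y ∈ S } | x ∈ S \ S_m }`. -/
noncomputable def Rnum [Fintype S] (P : S → S → ℝ) (F1 : S → ℝ) : ℕ :=
  sInf {r | ∃ x, x ∉ Sm P F1 ∧ r = Finset.univ.sup fun y => dSteps P x y}

/-- The maximum change of `F` in a single transition. -/
noncomputable def Lmax [Fintype S] (P : S → S → ℝ) (F : S → ℝ) : ℝ :=
  sSup {v | ∃ x y : S, 0 < P y x ∧ v = |F x - F y|}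

/-- The minimum nonvanishing value of the generation probability. -/
noncomputable def wmin [Fintype S] (P : S → S → ℝ) : ℝ :=
  sInf {v | ∃ x y : S, 0 < P y x ∧ v = P y x}

/-- The set of global minima of `F1`. -/
def S1min [Fintype S] (F1 : S → ℝ) : Set S := {x | ∀ y, F1 x ≤ F1 y}

/-- The limiting distribution: proportional to `exp (-F0 x / T0)` on the set of
global minima of `F1`, and zero elsewhere. -/
noncomputable def rLimit [Fintype S] (F0 F1 : S → ℝ) (T0 : ℝ) (x : S) : ℝ :=
  if ∀ y, F1 x ≤ F1 y then
    Real.exp (-(F0 x) / T0) /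
      ∑ y ∈ Finset.univ.filter (fun y => ∀ z, F1 y ≤ F1 z), Real.exp (-(F0 y) / T0)
  else 0

/-- The ±1 value of a Boolean spin. -/
noncomputable def spin (b : Bool) : ℝ := if b then 1 else -1

/-- Classical Ising energy `E0(x) = -∑_{i<j} J_ij x_i x_j`. -/
noncomputable def E0def (N : ℕ) (J : Fin N → Fin N → ℝ) (x : Fin N → Bool) : ℝ :=
  -∑ p ∈ Finset.univ.filter (fun p : Fin N × Fin N => p.1 < p.2),
    J p.1 p.2 * spin (x p.1) * spin (x p.2)

/-- Hamming distance between spin configurations. -/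
def hamming (N : ℕ) (x y : Fin N → Bool) : ℕ :=
  (Finset.univ.filter fun i => x i ≠ y i).card

/-- GFMC weight `w(x;t) = 1 - Δt (E0(x) - E_T) + N Δt Γ(t)`. -/
noncomputable def wgt (N : ℕ) (J : Fin N → Fin N → ℝ) (Δt ET : ℝ) (Γ : ℕ → ℝ) (t : ℕ)
    (x : Fin N → Bool) : ℝ :=
  1 - Δt * (E0def N J x - ET) + N * Δt * Γ t

/-- The normalized GFMC transition probability `G1(y,x;t)`. -/
noncomputable def G1mat (N : ℕ) (J : Fin N → Fin N → ℝ) (Δt ET : ℝ) (Γ : ℕ → ℝ) (t : ℕ) :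
    Matrix (Fin N → Bool) (Fin N → Bool) ℝ :=
  Matrix.of fun y x =>
    if y = x then 1 - N * Δt * Γ t / wgt N J Δt ET Γ t x
    else if hamming N x y = 1 then Δt * Γ t / wgt N J Δt ET Γ t x
    else 0

/-- `E_min = min { E0(x) | x ∈ S }`. -/
noncomputable def Emin (N : ℕ) (J : Fin N → Fin N → ℝ) : ℝ :=
  Finset.univ.inf' Finset.univ_nonempty (E0def N J)

/-- Stationary distribution `q(x;t) = w(x;t) / ∑_y w(y;t)` of GFMC. -/
noncomputable def qGFMC (N : ℕ) (J : Fin N → Fin N → ℝ) (Δt ET : ℝ) (Γ : ℕ → ℝ) (t : ℕ)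
    (x : Fin N → Bool) : ℝ :=
  wgt N J Δt ET Γ t x / ∑ y, wgt N J Δt ET Γ t y

/-- The alternative GFMC transition probability `G2(y,x;t)`. -/
noncomputable def G2mat (N : ℕ) (Δt : ℝ) (Γ : ℕ → ℝ) (t : ℕ) :
    Matrix (Fin N → Bool) (Fin N → Bool) ℝ :=
  Matrix.of fun y x =>
    (Real.cosh (Δt * Γ t) * Real.exp (-(Δt * Γ t))) ^ N *
      Real.tanh (Δt * Γ t) ^ hamming N x y

/-- Inverse hyperbolic tangent. -/
noncomputable def artanh (x : ℝ) : ℝ := (1 / 2) * Real.log ((1 + x) / (1 - x))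

/-- The cost function of the Suzuki–Trotter representation of the TFIM:
`F0(x) = -(β/M) ∑_k ∑_{ij} J_ij S_i^(k) S_j^(k)`. -/
noncomputable def F0tfim (N M : ℕ) (β : ℝ) (J : Fin (N + 1) → Fin (N + 1) → ℝ)
    (x : Fin (N + 1) × Fin M → Bool) : ℝ :=
  -(β / M) * ∑ k : Fin M, ∑ i : Fin (N + 1), ∑ j : Fin (N + 1),
    J i j * spin (x (i, k)) * spin (x (j, k))

/-- The kinetic term of the Suzuki–Trotter representation of the TFIM:
`F1(x) = -∑_k ∑_i S_i^(k) S_i^(k+1)` with periodic boundary along the Trotter direction. -/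
noncomputable def F1tfim (N M : ℕ) [NeZero M] (x : Fin (N + 1) × Fin M → Bool) : ℝ :=
  -∑ k : Fin M, ∑ i : Fin (N + 1), spin (x (i, k)) * spin (x (i, k + 1))

/-- The ferromagnetic coupling `γ(t) = (1/2) log coth (β Γ(t) / M)` between Trotter slices. -/
noncomputable def γtfim (M : ℕ) (β : ℝ) (Γ : ℕ → ℝ) (t : ℕ) : ℝ :=
  (1 / 2) * Real.log (1 / Real.tanh (β * Γ t / M))

/-- Tsallis-type generalized acceptance ratio `u(y,x;t)`. -/
noncomputable def uGen {S : Type*} (F0 F1 : S → ℝ) (T0 : ℝ) (T1 : ℕ → ℝ) (qp : ℝ) (t : ℕ)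
    (y x : S) : ℝ :=
  Real.exp (-(F0 y - F0 x) / T0) *
    (1 + (qp - 1) * (F1 y - F1 x) / T1 t) ^ (1 / (1 - qp))


set_option linter.unusedSectionVars false
set_option linter.unusedVariables false

section Aux

variable {S : Type*} [Fintype S] [DecidableEq S]

lemma prodG_self (G : ℕ → Matrix S S ℝ) (t0 : ℕ) : prodG G t0 t0 = 1 := by
  simp [prodG]

lemma prodG_succ (G : ℕ → Matrix S S ℝ) {t t0 : ℕ} (h : t0 ≤ t) :
    prodG G (t + 1) t0 = G t * prodG G t t0 := by
  unfold prodG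
  have h1 : t + 1 - t0 = (t - t0) + 1 := by omega
  have h2 : t0 + (t - t0) = t := by omega
  rw [h1, List.range_succ, List.map_append, List.reverse_append]
  simp [h2]

lemma prodG_comp (G : ℕ → Matrix S S ℝ) {t s t0 : ℕ} (h1 : t0 ≤ s) (h2 : s ≤ t) :
    prodG G t s * prodG G s t0 = prodG G t t0 := by
  induction t with
  | zero =>
      have hs : s = 0 := by omega
      subst hs; simp [prodG_self]
  | succ t ih =>
      rcases Nat.eq_or_lt_of_le h2 with h3 | h3
      · rw [← h3, prodG_self, one_mul]
      · have h4 : s ≤ t := by omega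
        rw [prodG_succ G h4, prodG_succ G (le_trans h1 h4), mul_assoc, ih h4]

lemma isStochastic_one : IsStochastic (1 : Matrix S S ℝ) := by
  constructor
  · intro y x
    by_cases h : y = x <;> simp [Matrix.one_apply, h]
  · intro x; simp [Matrix.one_apply]

lemma IsStochastic.mul {A B : Matrix S S ℝ} (hA : IsStochastic A) (hB : IsStochastic B) :
    IsStochastic (A * B) := by
  constructor
  · intro y x
    rw [Matrix.mul_apply]
    exact Finset.sum_nonneg fun z _ => mul_nonneg (hA.1 y z) (hB.1 z x)
  · intro x
    simp only [Matrix.mul_apply]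
    rw [Finset.sum_comm]
    have : ∀ z ∈ Finset.univ, ∑ y, A y z * B z x = B z x := by
      intro z _
      rw [← Finset.sum_mul, hA.2 z, one_mul]
    rw [Finset.sum_congr rfl this, hB.2 x]

lemma isStochastic_listProd (l : List (Matrix S S ℝ)) (h : ∀ A ∈ l, IsStochastic A) :
    IsStochastic l.prod := by
  induction l with
  | nil => simpa using isStochastic_one
  | cons A l ih =>
      rw [List.prod_cons]
      exact (h A (by simp)).mul (ih fun B hB => h B (List.mem_cons_of_mem _ hB))

lemma isStochastic_prodG {G : ℕ → Matrix S S ℝ} (hG : ∀ t, IsStochastic (G t)) (t t0 : ℕ) :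
    IsStochastic (prodG G t t0) := by
  apply isStochastic_listProd
  intro A hA
  rw [List.mem_reverse, List.mem_map] at hA
  obtain ⟨k, -, rfl⟩ := hA
  exact hG _

lemma IsStochastic.entry_le_one {G : Matrix S S ℝ} (hG : IsStochastic G) (y x : S) :
    G y x ≤ 1 := by
  calc G y x ≤ ∑ z, G z x := Finset.single_le_sum (fun z _ => hG.1 z x) (Finset.mem_univ y)
  _ = 1 := hG.2 x

lemma IsStochastic.sum_mulVec {G : Matrix S S ℝ} (hG : IsStochastic G) (v : S → ℝ) :
    ∑ y, G.mulVec v y = ∑ x, v x := by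
  simp only [Matrix.mulVec, dotProduct]
  rw [Finset.sum_comm]
  apply Finset.sum_congr rfl
  intro x _
  rw [← Finset.sum_mul, hG.2 x, one_mul]

lemma IsStochastic.isProbVec_mulVec {G : Matrix S S ℝ} (hG : IsStochastic G) {p : S → ℝ}
    (hp : IsProbVec p) : IsProbVec (G.mulVec p) := by
  constructor
  · intro y
    exact Finset.sum_nonneg fun x _ => mul_nonneg (hG.1 y x) (hp.1 x)
  · rw [hG.sum_mulVec]; exact hp.2

lemma IsStochastic.abs_mulVec_le {G : Matrix S S ℝ} (hG : IsStochastic G) (v : S → ℝ) :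
    ∑ y, |G.mulVec v y| ≤ ∑ x, |v x| := by
  calc ∑ y, |G.mulVec v y| ≤ ∑ y, ∑ x, G y x * |v x| := by
        apply Finset.sum_le_sum
        intro y _
        calc |G.mulVec v y| ≤ ∑ x, |G y x * v x| := Finset.abs_sum_le_sum_abs _ _
        _ = ∑ x, G y x * |v x| := by
            apply Finset.sum_congr rfl
            intro x _
            rw [abs_mul, abs_of_nonneg (hG.1 y x)]
  _ = ∑ x, |v x| := by
        rw [Finset.sum_comm]
        apply Finset.sum_congr rfl
        intro x _
        rw [← Finset.sum_mul, hG.2 x, one_mul]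

/-- Dobrushin-type contraction: if some row of a stochastic matrix is uniformly
bounded below by `δ`, then `G` contracts mean-zero vectors by a factor `1 - δ`. -/
lemma IsStochastic.contract {G : Matrix S S ℝ} (hG : IsStochastic G) (xs : S) {δ : ℝ}
    (hδ0 : 0 ≤ δ) (hδ : ∀ x, δ ≤ G xs x) {v : S → ℝ} (hv : ∑ x, v x = 0) :
    ∑ y, |G.mulVec v y| ≤ (1 - δ) * ∑ x, |v x| := by
  set G' : Matrix S S ℝ := Matrix.of fun y x => G y x - if y = xs then δ else 0 with hG'
  have hnn : ∀ y x, 0 ≤ G' y x := by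
    intro y x
    by_cases h : y = xs
    · subst h; simpa [G'] using hδ x
    · simpa [G', h] using hG.1 y x
  have hmv : ∀ y, G'.mulVec v y = G.mulVec v y := by
    intro y
    simp only [Matrix.mulVec, dotProduct, G', Matrix.of_apply, sub_mul,
      Finset.sum_sub_distrib]
    rw [← Finset.mul_sum, hv, mul_zero, sub_zero]
  have hcol : ∀ x, ∑ y, G' y x = 1 - δ := by
    intro x
    simp only [G', Matrix.of_apply, Finset.sum_sub_distrib, hG.2 x]
    congr 1
    simp
  calc ∑ y, |G.mulVec v y| = ∑ y, |G'.mulVec v y| := by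
        apply Finset.sum_congr rfl; intro y _; rw [hmv]
  _ ≤ ∑ y, ∑ x, G' y x * |v x| := by
        apply Finset.sum_le_sum
        intro y _
        calc |G'.mulVec v y| ≤ ∑ x, |G' y x * v x| := Finset.abs_sum_le_sum_abs _ _
        _ = ∑ x, G' y x * |v x| := by
            apply Finset.sum_congr rfl
            intro x _
            rw [abs_mul, abs_of_nonneg (hnn y x)]
  _ = (1 - δ) * ∑ x, |v x| := by
        rw [Finset.sum_comm, Finset.mul_sum]
        apply Finset.sum_congr rfl
        intro x _
        rw [← Finset.sum_mul, hcol x]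

end Aux

section QProps

variable {S : Type*} [Fintype S] [DecidableEq S] [Nonempty S]
variable (F0 F1 : S → ℝ) (T0 : ℝ) (T1 : ℕ → ℝ)

lemma Zfun_pos (t : ℕ) : 0 < Zfun F0 F1 T0 T1 t :=
  Finset.sum_pos (fun x _ => Real.exp_pos _) Finset.univ_nonempty

lemma qB_pos (t : ℕ) (x : S) : 0 < qB F0 F1 T0 T1 t x :=
  div_pos (Real.exp_pos _) (Zfun_pos F0 F1 T0 T1 t)

lemma qB_sum (t : ℕ) : ∑ x, qB F0 F1 T0 T1 t x = 1 := by
  unfold qB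
  rw [← Finset.sum_div]
  exact div_self (Zfun_pos F0 F1 T0 T1 t).ne'

lemma qB_isProbVec (t : ℕ) : IsProbVec (qB F0 F1 T0 T1 t) :=
  ⟨fun x => (qB_pos F0 F1 T0 T1 t x).le, qB_sum F0 F1 T0 T1 t⟩

lemma qB_ratio (t : ℕ) (y x : S) :
    qB F0 F1 T0 T1 t y / qB F0 F1 T0 T1 t x
      = Real.exp (-(F0 y - F0 x) / T0 - (F1 y - F1 x) / T1 t) := by
  have hZ := (Zfun_pos F0 F1 T0 T1 t).ne'
  have h1 : qB F0 F1 T0 T1 t y / qB F0 F1 T0 T1 t x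
      = Real.exp (-(F0 y) / T0 - F1 y / T1 t) / Real.exp (-(F0 x) / T0 - F1 x / T1 t) := by
    unfold qB
    rw [div_div_div_comm, div_self hZ, div_one]
  rw [h1, ← Real.exp_sub]
  congr 1
  ring

variable (P : S → S → ℝ) (g : ℝ → ℝ)

lemma gpimc_apply (t : ℕ) (y x : S) :
    Gpimc P g F0 F1 T0 T1 t y x = if y = x
      then 1 - ∑ z, P z x * g (qB F0 F1 T0 T1 t z / qB F0 F1 T0 T1 t x)
      else P y x * g (qB F0 F1 T0 T1 t y / qB F0 F1 T0 T1 t x) := rfl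

lemma gpimc_stochastic (hP : IsGenProb P) (hg : IsAcceptFn g) (t : ℕ) :
    IsStochastic (Gpimc P g F0 F1 T0 T1 t) := by
  have hA : ∀ z x : S, g (qB F0 F1 T0 T1 t z / qB F0 F1 T0 T1 t x) ∈ Set.Icc (0 : ℝ) 1 :=
    fun z x => hg.maps _ (div_pos (qB_pos F0 F1 T0 T1 t z) (qB_pos F0 F1 T0 T1 t x)).le
  constructor
  · intro y x
    rw [gpimc_apply]
    by_cases h : y = x
    · rw [if_pos h]
      have : ∑ z, P z x * g (qB F0 F1 T0 T1 t z / qB F0 F1 T0 T1 t x) ≤ ∑ z, P z x := by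
        apply Finset.sum_le_sum
        intro z _
        calc P z x * g _ ≤ P z x * 1 := by
              exact mul_le_mul_of_nonneg_left (hA z x).2 (hP.nonneg x z)
        _ = P z x := mul_one _
      rw [hP.sum_one x] at this
      linarith
    · rw [if_neg h]
      exact mul_nonneg (hP.nonneg x y) (hA y x).1
  · intro x
    simp only [gpimc_apply]
    rw [← Finset.add_sum_erase _ _ (Finset.mem_univ x), if_pos rfl]
    have h1 : ∀ y ∈ Finset.univ.erase x,
        (if y = x then 1 - ∑ z, P z x * g (qB F0 F1 T0 T1 t z / qB F0 F1 T0 T1 t x)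
          else P y x * g (qB F0 F1 T0 T1 t y / qB F0 F1 T0 T1 t x))
          = P y x * g (qB F0 F1 T0 T1 t y / qB F0 F1 T0 T1 t x) := by
      intro y hy
      rw [if_neg (Finset.ne_of_mem_erase hy)]
    rw [Finset.sum_congr rfl h1, Finset.sum_erase]
    · ring
    · rw [hP.diag_zero, zero_mul]

lemma detailed_balance (hP : IsGenProb P) (hg : IsAcceptFn g) (t : ℕ) (x y : S) :
    P y x * g (qB F0 F1 T0 T1 t y / qB F0 F1 T0 T1 t x) * qB F0 F1 T0 T1 t x
      = P x y * g (qB F0 F1 T0 T1 t x / qB F0 F1 T0 T1 t y) * qB F0 F1 T0 T1 t y := by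
  set qx := qB F0 F1 T0 T1 t x with hqx
  set qy := qB F0 F1 T0 T1 t y with hqy
  have hqxp : 0 < qx := qB_pos F0 F1 T0 T1 t x
  have hqyp : 0 < qy := qB_pos F0 F1 T0 T1 t y
  have hu : 0 < qy / qx := div_pos hqyp hqxp
  have hinv : qx / qy = 1 / (qy / qx) := by
    field_simp
  rw [hinv, hg.ratio _ hu, hP.symm x y]
  field_simp

lemma qB_stationary (hP : IsGenProb P) (hg : IsAcceptFn g) (t : ℕ) :
    (Gpimc P g F0 F1 T0 T1 t).mulVec (qB F0 F1 T0 T1 t) = qB F0 F1 T0 T1 t := by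
  funext y
  simp only [Matrix.mulVec, dotProduct, gpimc_apply]
  rw [← Finset.add_sum_erase _ _ (Finset.mem_univ y), if_pos rfl]
  have h1 : ∀ x ∈ Finset.univ.erase y,
      (if y = x then 1 - ∑ z, P z x * g (qB F0 F1 T0 T1 t z / qB F0 F1 T0 T1 t x)
        else P y x * g (qB F0 F1 T0 T1 t y / qB F0 F1 T0 T1 t x)) * qB F0 F1 T0 T1 t x
        = P x y * g (qB F0 F1 T0 T1 t x / qB F0 F1 T0 T1 t y) * qB F0 F1 T0 T1 t y := by
    intro x hx
    rw [if_neg fun h => (Finset.ne_of_mem_erase hx) h.symm]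
    exact detailed_balance F0 F1 T0 T1 P g hP hg t x y
  rw [Finset.sum_congr rfl h1, ← Finset.sum_mul, Finset.sum_erase]
  · ring
  · simp [hP.diag_zero]

end QProps

section Conv

variable {S : Type*} [Fintype S] [DecidableEq S] [Nonempty S]
variable (F0 F1 : S → ℝ) (T0 : ℝ)

/-- Reparametrized partition sum relative to the state `x`. -/
noncomputable def Wf (x : S) (β : ℝ) : ℝ :=
  ∑ y, Real.exp (-(F0 y) / T0) * Real.exp (-(F1 y - F1 x) * β)

lemma Wf_pos (x : S) (β : ℝ) : 0 < Wf F0 F1 T0 x β :=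
  Finset.sum_pos (fun y _ => mul_pos (Real.exp_pos _) (Real.exp_pos _)) Finset.univ_nonempty

lemma qB_eq_Wf (T1 : ℕ → ℝ) (t : ℕ) (x : S) :
    qB F0 F1 T0 T1 t x = Real.exp (-(F0 x) / T0) / Wf F0 F1 T0 x (T1 t)⁻¹ := by
  have hW : Wf F0 F1 T0 x (T1 t)⁻¹
      = Real.exp (F1 x * (T1 t)⁻¹) * Zfun F0 F1 T0 T1 t := by
    unfold Wf Zfun
    rw [Finset.mul_sum]
    apply Finset.sum_congr rfl
    intro y _
    rw [← Real.exp_add, ← Real.exp_add]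
    congr 1
    rw [div_eq_mul_inv (F1 y) (T1 t)]
    ring
  unfold qB
  rw [hW, ← div_div, ← Real.exp_sub]
  have harg : -F0 x / T0 - F1 x / T1 t = -F0 x / T0 - F1 x * (T1 t)⁻¹ := by
    rw [div_eq_mul_inv (F1 x) (T1 t)]
  rw [harg]

lemma Wf_antitone_of_min {x : S} (hx : ∀ y, F1 x ≤ F1 y) :
    Antitone (Wf F0 F1 T0 x) := by
  intro β1 β2 h
  apply Finset.sum_le_sum
  intro y _
  apply mul_le_mul_of_nonneg_left _ (Real.exp_pos _).le
  apply Real.exp_le_exp.2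
  have h1 : 0 ≤ F1 y - F1 x := by linarith [hx y]
  nlinarith

lemma Wf_hasDerivAt (x : S) (β : ℝ) :
    HasDerivAt (Wf F0 F1 T0 x)
      (∑ y, Real.exp (-(F0 y) / T0) * (-(F1 y - F1 x) * Real.exp (-(F1 y - F1 x) * β))) β := by
  apply HasDerivAt.fun_sum
  intro y _
  have h1 : HasDerivAt (fun β : ℝ => -(F1 y - F1 x) * β) (-(F1 y - F1 x)) β := by
    simpa using (hasDerivAt_id β).const_mul (-(F1 y - F1 x))
  have h2 := (h1.exp).const_mul (Real.exp (-(F0 y) / T0))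
  exact h2.congr_deriv (by ring)

lemma Wf_eventually_mono (x : S) (hx : ¬ ∀ y, F1 x ≤ F1 y) :
    ∃ B : ℝ, 0 ≤ B ∧ MonotoneOn (Wf F0 F1 T0 x) (Set.Ici B) := by
  obtain ⟨y0, -, hy0⟩ := Finset.exists_min_image Finset.univ F1
    ⟨Classical.arbitrary S, Finset.mem_univ _⟩
  push_neg at hx
  obtain ⟨z, hz⟩ := hx
  have hc0 : 0 < -(F1 y0 - F1 x) := by
    have := hy0 z (Finset.mem_univ z); linarith
  set c0 : ℝ := -(F1 y0 - F1 x) with hc0def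
  set b0 : ℝ := Real.exp (-(F0 y0) / T0) with hb0
  have hb0p : 0 < b0 := Real.exp_pos _
  set M : ℝ := ∑ y, Real.exp (-(F0 y) / T0) * max (F1 y - F1 x) 0 with hM
  have hMnn : 0 ≤ M :=
    Finset.sum_nonneg fun y _ => mul_nonneg (Real.exp_pos _).le (le_max_right _ _)
  set B : ℝ := max 0 (Real.log ((M + 1) / (b0 * c0)) / c0) with hB
  refine ⟨B, le_max_left _ _, ?_⟩
  have hderiv : ∀ β ∈ interior (Set.Ici B), 0 < deriv (Wf F0 F1 T0 x) β := by
    intro β hβ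
    rw [interior_Ici] at hβ
    have hβB : B ≤ β := le_of_lt hβ
    have hβ0 : 0 ≤ β := le_trans (le_max_left _ _) hβB
    rw [(Wf_hasDerivAt F0 F1 T0 x β).deriv]
    have hsplit := Finset.add_sum_erase Finset.univ
      (fun y => Real.exp (-(F0 y) / T0) * (-(F1 y - F1 x) * Real.exp (-(F1 y - F1 x) * β)))
      (Finset.mem_univ y0)
    rw [← hsplit]
    have hterm : M + 1 ≤ Real.exp (-(F0 y0) / T0) * (-(F1 y0 - F1 x) *
        Real.exp (-(F1 y0 - F1 x) * β)) := by
      have h1 : Real.log ((M + 1) / (b0 * c0)) ≤ c0 * β := by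
        have h2 : Real.log ((M + 1) / (b0 * c0)) / c0 ≤ β := le_trans (le_max_right _ _) hβB
        calc Real.log ((M + 1) / (b0 * c0)) = c0 * (Real.log ((M + 1) / (b0 * c0)) / c0) := by
              field_simp
        _ ≤ c0 * β := by
              exact mul_le_mul_of_nonneg_left h2 hc0.le
      have h3 : (M + 1) / (b0 * c0) ≤ Real.exp (c0 * β) := by
        calc (M + 1) / (b0 * c0) = Real.exp (Real.log ((M + 1) / (b0 * c0))) := by
              rw [Real.exp_log (div_pos (by linarith) (mul_pos hb0p hc0))]
        _ ≤ Real.exp (c0 * β) := Real.exp_le_exp.2 h1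
      have h4 : M + 1 ≤ b0 * c0 * Real.exp (c0 * β) := by
        rw [div_le_iff₀ (mul_pos hb0p hc0)] at h3
        linarith
      calc M + 1 ≤ b0 * c0 * Real.exp (c0 * β) := h4
      _ = Real.exp (-(F0 y0) / T0) * (-(F1 y0 - F1 x) * Real.exp (-(F1 y0 - F1 x) * β)) := by
          rw [← hc0def, ← hb0]
          ring_nf
    have hrest : -M ≤ ∑ y ∈ Finset.univ.erase y0,
        Real.exp (-(F0 y) / T0) * (-(F1 y - F1 x) * Real.exp (-(F1 y - F1 x) * β)) := by
      have h5 : ∀ y ∈ Finset.univ.erase y0,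
          -(Real.exp (-(F0 y) / T0) * max (F1 y - F1 x) 0)
            ≤ Real.exp (-(F0 y) / T0) * (-(F1 y - F1 x) * Real.exp (-(F1 y - F1 x) * β)) := by
        intro y _
        set c : ℝ := F1 y - F1 x with hc
        set b : ℝ := Real.exp (-(F0 y) / T0) with hbdef
        have hbp : 0 < b := Real.exp_pos _
        rcases le_or_gt c 0 with hcle | hcpos
        · have hmax : max c 0 = 0 := max_eq_right hcle
          rw [hmax, mul_zero, neg_zero]
          have : 0 ≤ -c * Real.exp (-c * β) :=
            mul_nonneg (by linarith) (Real.exp_pos _).le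
          nlinarith
        · have hmax : max c 0 = c := max_eq_left hcpos.le
          rw [hmax]
          have hexple : Real.exp (-c * β) ≤ 1 := by
            rw [← Real.exp_zero]
            apply Real.exp_le_exp.2
            nlinarith
          have : c * Real.exp (-c * β) ≤ c := by nlinarith [Real.exp_pos (-c * β)]
          nlinarith
      calc -M ≤ -(∑ y ∈ Finset.univ.erase y0, Real.exp (-(F0 y) / T0) * max (F1 y - F1 x) 0) := by
            rw [neg_le_neg_iff, hM]
            apply Finset.sum_le_sum_of_subset_of_nonneg (Finset.erase_subset _ _)
            intro y _ _
            exact mul_nonneg (Real.exp_pos _).le (le_max_right _ _)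
      _ = ∑ y ∈ Finset.univ.erase y0,
            -(Real.exp (-(F0 y) / T0) * max (F1 y - F1 x) 0) := by rw [Finset.sum_neg_distrib]
      _ ≤ _ := Finset.sum_le_sum h5
    linarith
  have hcont : ContinuousOn (Wf F0 F1 T0 x) (Set.Ici B) :=
    fun β _ => ((Wf_hasDerivAt F0 F1 T0 x β).differentiableAt.continuousAt).continuousWithinAt
  exact (strictMonoOn_of_deriv_pos (convex_Ici B) hcont hderiv).monotoneOn

lemma beta_mono (T1 : ℕ → ℝ) (hT1pos : ∀ t, 0 < T1 t) (hT1anti : Antitone T1) :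
    Monotone (fun t => (T1 t)⁻¹) := by
  intro s t h
  exact inv_anti₀ (hT1pos t) (hT1anti h)

lemma beta_tendsto (T1 : ℕ → ℝ) (hT1pos : ∀ t, 0 < T1 t)
    (hT1lim : Tendsto T1 atTop (nhds 0)) :
    Tendsto (fun t => (T1 t)⁻¹) atTop atTop := by
  have h : Tendsto T1 atTop (nhdsWithin 0 (Set.Ioi 0)) :=
    tendsto_nhdsWithin_iff.2 ⟨hT1lim, Filter.Eventually.of_forall fun t => hT1pos t⟩
  exact h.inv_tendsto_nhdsGT_zero

lemma qB_eventually_monotoneOn (T1 : ℕ → ℝ) (hT1pos : ∀ t, 0 < T1 t) (hT1anti : Antitone T1)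
    (hT1lim : Tendsto T1 atTop (nhds 0)) :
    ∃ Tstar : ℕ, ∀ x : S, MonotoneOn (fun t => qB F0 F1 T0 T1 t x) (Set.Ici Tstar)
      ∨ AntitoneOn (fun t => qB F0 F1 T0 T1 t x) (Set.Ici Tstar) := by
  have hmB : ∀ x : S, ∃ B : ℝ, 0 ≤ B ∧
      ((∀ y, F1 x ≤ F1 y) ∨ MonotoneOn (Wf F0 F1 T0 x) (Set.Ici B)) := by
    intro x
    by_cases hx : ∀ y, F1 x ≤ F1 y
    · exact ⟨0, le_refl 0, Or.inl hx⟩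
    · obtain ⟨B, hB0, hB⟩ := Wf_eventually_mono F0 F1 T0 x hx
      exact ⟨B, hB0, Or.inr hB⟩
  choose B hB0 hBalt using hmB
  set Bm : ℝ := Finset.univ.sup' Finset.univ_nonempty B with hBm
  obtain ⟨Tstar, hTs⟩ := Filter.eventually_atTop.1
    ((beta_tendsto T1 hT1pos hT1lim).eventually_ge_atTop Bm)
  refine ⟨Tstar, fun x => ?_⟩
  have hβs : ∀ s : ℕ, s ∈ Set.Ici Tstar → B x ≤ (T1 s)⁻¹ := fun s hs =>
    le_trans (Finset.le_sup' B (Finset.mem_univ x)) (hTs s hs)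
  rcases hBalt x with hx | hmono
  · left
    intro s hs t ht hst
    simp only [qB_eq_Wf]
    exact div_le_div_of_nonneg_left (Real.exp_pos _).le (Wf_pos F0 F1 T0 x _)
      (Wf_antitone_of_min F0 F1 T0 hx (beta_mono T1 hT1pos hT1anti hst))
  · right
    intro s hs t ht hst
    simp only [qB_eq_Wf]
    exact div_le_div_of_nonneg_left (Real.exp_pos _).le (Wf_pos F0 F1 T0 x _)
      (hmono (Set.mem_Ici.2 (hβs s hs)) (Set.mem_Ici.2 (hβs t ht))
        (beta_mono T1 hT1pos hT1anti hst))

lemma qB_tendsto_rLimit (T1 : ℕ → ℝ) (hT1pos : ∀ t, 0 < T1 t)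
    (hT1lim : Tendsto T1 atTop (nhds 0)) (x : S) :
    Tendsto (fun t => qB F0 F1 T0 T1 t x) atTop (nhds (rLimit F0 F1 T0 x)) := by
  have hβ := beta_tendsto T1 hT1pos hT1lim
  by_cases hx : ∀ y, F1 x ≤ F1 y
  · set L : ℝ := ∑ y ∈ Finset.univ.filter (fun y => ∀ z, F1 y ≤ F1 z),
      Real.exp (-(F0 y) / T0) with hLdef
    have hWlim : Tendsto (fun t => Wf F0 F1 T0 x ((T1 t)⁻¹)) atTop (nhds L) := by
      have hL : L = ∑ y, (if ∀ z, F1 y ≤ F1 z then Real.exp (-(F0 y) / T0) else 0) := by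
        rw [hLdef, Finset.sum_filter]
      rw [hL]
      unfold Wf
      apply tendsto_finset_sum
      intro y _
      by_cases hy : ∀ z, F1 y ≤ F1 z
      · rw [if_pos hy]
        have hyx : F1 y - F1 x = 0 := by
          have h1 := hy x; have h2 := hx y; linarith
        simp [hyx]
      · rw [if_neg hy]
        push_neg at hy
        obtain ⟨z, hz⟩ := hy
        have hc : 0 < F1 y - F1 x := by have := hx z; linarith
        have h1 : Tendsto (fun t => -(F1 y - F1 x) * (T1 t)⁻¹) atTop atBot :=
          hβ.const_mul_atTop_of_neg (by linarith)
        have h2 : Tendsto (fun t => Real.exp (-(F1 y - F1 x) * (T1 t)⁻¹)) atTop (nhds 0) :=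
          Real.tendsto_exp_atBot.comp h1
        have h3 := h2.const_mul (Real.exp (-(F0 y) / T0))
        simpa using h3
    have hL_pos : 0 < L := by
      apply Finset.sum_pos (fun y _ => Real.exp_pos _)
      exact ⟨x, Finset.mem_filter.2 ⟨Finset.mem_univ x, hx⟩⟩
    have hlim := (tendsto_const_nhds (x := Real.exp (-(F0 x) / T0))
      (f := atTop (α := ℕ))).div hWlim hL_pos.ne'
    have hr : rLimit F0 F1 T0 x = Real.exp (-(F0 x) / T0) / L := by
      rw [rLimit, if_pos hx]
    rw [hr]
    exact Tendsto.congr (fun t => (qB_eq_Wf F0 F1 T0 T1 t x).symm) hlim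
  · have hWtop : Tendsto (fun t => Wf F0 F1 T0 x ((T1 t)⁻¹)) atTop atTop := by
      have hx' := hx
      push_neg at hx'
      obtain ⟨z, hz⟩ := hx'
      have h1 : Tendsto (fun t => -(F1 z - F1 x) * (T1 t)⁻¹) atTop atTop :=
        Tendsto.const_mul_atTop (by linarith) hβ
      have hlow : Tendsto
          (fun t => Real.exp (-(F0 z) / T0) * Real.exp (-(F1 z - F1 x) * (T1 t)⁻¹))
          atTop atTop :=
        Tendsto.const_mul_atTop (Real.exp_pos _) (Real.tendsto_exp_atTop.comp h1)
      apply tendsto_atTop_mono _ hlow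
      intro t
      unfold Wf
      exact Finset.single_le_sum
        (f := fun y => Real.exp (-(F0 y) / T0) * Real.exp (-(F1 y - F1 x) * (T1 t)⁻¹))
        (fun y _ => mul_nonneg (Real.exp_pos _).le (Real.exp_pos _).le)
        (Finset.mem_univ z)
    have hlim : Tendsto (fun t => Real.exp (-(F0 x) / T0) / Wf F0 F1 T0 x ((T1 t)⁻¹))
        atTop (nhds 0) := Tendsto.div_atTop tendsto_const_nhds hWtop
    have hr : rLimit F0 F1 T0 x = 0 := by rw [rLimit, if_neg hx]
    rw [hr]
    exact Tendsto.congr (fun t => (qB_eq_Wf F0 F1 T0 T1 t x).symm) hlim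

lemma dist1_qB_tendsto (T1 : ℕ → ℝ) (hT1pos : ∀ t, 0 < T1 t)
    (hT1lim : Tendsto T1 atTop (nhds 0)) :
    Tendsto (fun t => dist1 (qB F0 F1 T0 T1 t) (rLimit F0 F1 T0)) atTop (nhds 0) := by
  have h : Tendsto (fun t => ∑ x, |qB F0 F1 T0 T1 t x - rLimit F0 F1 T0 x|)
      atTop (nhds (∑ _x : S, (0 : ℝ))) := by
    apply tendsto_finset_sum
    intro x _
    have h1 := ((qB_tendsto_rLimit F0 F1 T0 T1 hT1pos hT1lim x).sub
      (tendsto_const_nhds (x := rLimit F0 F1 T0 x))).abs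
    simpa using h1
  simpa [dist1] using h

end Conv

section Dist1

variable {S : Type*} [Fintype S]

lemma dist1_nonneg (p p' : S → ℝ) : 0 ≤ dist1 p p' :=
  Finset.sum_nonneg fun x _ => abs_nonneg _

lemma dist1_triangle (p p' p'' : S → ℝ) : dist1 p p'' ≤ dist1 p p' + dist1 p' p'' := by
  rw [dist1, dist1, dist1, ← Finset.sum_add_distrib]
  apply Finset.sum_le_sum
  intro x _
  calc |p x - p'' x| = |(p x - p' x) + (p' x - p'' x)| := by ring_nf
  _ ≤ |p x - p' x| + |p' x - p'' x| := abs_add_le _ _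

lemma dist1_comm (p p' : S → ℝ) : dist1 p p' = dist1 p' p := by
  unfold dist1
  apply Finset.sum_congr rfl
  intro x _
  rw [abs_sub_comm]

lemma dist1_le_two {p p' : S → ℝ} (hp : IsProbVec p) (hp' : IsProbVec p') :
    dist1 p p' ≤ 2 := by
  have h : dist1 p p' ≤ ∑ x, (p x + p' x) := by
    apply Finset.sum_le_sum
    intro x _
    rw [abs_sub_le_iff]
    constructor
    · have := hp'.1 x; linarith [abs_nonneg (p x - p' x), hp.1 x]
    · have := hp.1 x; linarith [hp'.1 x]
  rw [Finset.sum_add_distrib, hp.2, hp'.2] at h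
  linarith

lemma sum_abs_sub_of_monotoneOn {u : ℕ → ℝ} {T s : ℕ} (h : MonotoneOn u (Set.Ici T))
    (hs : T ≤ s) : ∀ t, s ≤ t → ∑ k ∈ Finset.Ico s t, |u (k + 1) - u k| = |u t - u s| := by
  intro t ht
  induction t, ht using Nat.le_induction with
  | base => simp
  | succ t ht ih =>
      rw [Finset.sum_Ico_succ_top ht, ih]
      have h1 : u s ≤ u t := h (Set.mem_Ici.2 hs) (Set.mem_Ici.2 (hs.trans ht)) ht
      have h2 : u t ≤ u (t + 1) := h (Set.mem_Ici.2 (hs.trans ht))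
        (Set.mem_Ici.2 ((hs.trans ht).trans (Nat.le_succ t))) (Nat.le_succ t)
      rw [abs_of_nonneg (by linarith), abs_of_nonneg (by linarith),
        abs_of_nonneg (by linarith)]
      ring

lemma sum_abs_sub_of_antitoneOn {u : ℕ → ℝ} {T s : ℕ} (h : AntitoneOn u (Set.Ici T))
    (hs : T ≤ s) : ∀ t, s ≤ t → ∑ k ∈ Finset.Ico s t, |u (k + 1) - u k| = |u t - u s| := by
  intro t ht
  induction t, ht using Nat.le_induction with
  | base => simp
  | succ t ht ih =>
      rw [Finset.sum_Ico_succ_top ht, ih]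
      have h1 : u t ≤ u s := h (Set.mem_Ici.2 hs) (Set.mem_Ici.2 (hs.trans ht)) ht
      have h2 : u (t + 1) ≤ u t := h (Set.mem_Ici.2 (hs.trans ht))
        (Set.mem_Ici.2 ((hs.trans ht).trans (Nat.le_succ t))) (Nat.le_succ t)
      rw [abs_of_nonpos (by linarith), abs_of_nonpos (by linarith),
        abs_of_nonpos (by linarith)]
      ring

end Dist1

section SumDist

variable {S : Type*} [Fintype S] [DecidableEq S] [Nonempty S]
variable (F0 F1 : S → ℝ) (T0 : ℝ)

lemma sum_dist1_qB (T1 : ℕ → ℝ) (hT1pos : ∀ t, 0 < T1 t) (hT1anti : Antitone T1)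
    (hT1lim : Tendsto T1 atTop (nhds 0)) :
    ∃ Tstar : ℕ, ∀ s t : ℕ, Tstar ≤ s → s ≤ t →
      ∑ k ∈ Finset.Ico s t, dist1 (qB F0 F1 T0 T1 (k + 1)) (qB F0 F1 T0 T1 k)
        = dist1 (qB F0 F1 T0 T1 t) (qB F0 F1 T0 T1 s) := by
  obtain ⟨Tstar, hTs⟩ := qB_eventually_monotoneOn F0 F1 T0 T1 hT1pos hT1anti hT1lim
  refine ⟨Tstar, fun s t hs hst => ?_⟩
  unfold dist1
  rw [Finset.sum_comm]
  apply Finset.sum_congr rfl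
  intro x _
  rcases hTs x with hmono | hanti
  · exact sum_abs_sub_of_monotoneOn hmono hs t hst
  · exact sum_abs_sub_of_antitoneOn hanti hs t hst

end SumDist

section Consts

variable {S : Type*} [Fintype S] [DecidableEq S] [Nonempty S]

lemma lmax_set_finite (P : S → S → ℝ) (F : S → ℝ) :
    {v | ∃ x y : S, 0 < P y x ∧ v = |F x - F y|}.Finite := by
  apply Set.Finite.subset (Set.finite_range fun p : S × S => |F p.1 - F p.2|)
  rintro v ⟨x, y, -, rfl⟩
  exact ⟨(x, y), rfl⟩

lemma le_Lmax (P : S → S → ℝ) (F : S → ℝ) {x y : S} (h : 0 < P y x) :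
    |F x - F y| ≤ Lmax P F :=
  le_csSup (lmax_set_finite P F).bddAbove ⟨x, y, h, rfl⟩

lemma wmin_set_finite (P : S → S → ℝ) :
    {v | ∃ x y : S, 0 < P y x ∧ v = P y x}.Finite := by
  apply Set.Finite.subset (Set.finite_range fun p : S × S => P p.2 p.1)
  rintro v ⟨x, y, -, rfl⟩
  exact ⟨(x, y), rfl⟩

lemma wmin_le (P : S → S → ℝ) {x y : S} (h : 0 < P y x) : wmin P ≤ P y x :=
  csInf_le (wmin_set_finite P).bddBelow ⟨x, y, h, rfl⟩

lemma exists_edge {P : S → S → ℝ} {F1 : S → ℝ} (hL1 : 0 < Lmax P F1) :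
    ∃ x y : S, 0 < P y x := by
  by_contra h
  push_neg at h
  have hempty : {v | ∃ x y : S, 0 < P y x ∧ v = |F1 x - F1 y|} = ∅ := by
    ext v
    simp only [Set.mem_setOf_eq, Set.mem_empty_iff_false, iff_false, not_exists]
    rintro x y ⟨hxy, -⟩
    exact absurd hxy (not_lt.2 (h x y))
  rw [Lmax, hempty, Real.sSup_empty] at hL1
  exact lt_irrefl 0 hL1

lemma wmin_pos {P : S → S → ℝ} (hne : ∃ x y : S, 0 < P y x) : 0 < wmin P := by
  obtain ⟨x, y, h⟩ := hne
  have hne' : {v | ∃ x y : S, 0 < P y x ∧ v = P y x}.Nonempty := ⟨P y x, x, y, h, rfl⟩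
  have hmem := Set.Nonempty.csInf_mem hne' (wmin_set_finite P)
  obtain ⟨x', y', h', heq⟩ := hmem
  rw [wmin, heq]
  exact h'

lemma not_mem_Sm {P : S → S → ℝ} {F1 : S → ℝ} {x : S} (h : x ∉ Sm P F1) :
    ∃ y, 0 < P y x ∧ F1 x < F1 y := by
  simp only [Sm, Set.mem_setOf_eq] at h
  push_neg at h
  obtain ⟨y, hy1, hy2⟩ := h
  exact ⟨y, hy1, hy2⟩

lemma rnum_spec {P : S → S → ℝ} {F1 : S → ℝ} (hne : ∃ x : S, x ∉ Sm P F1) :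
    ∃ xs : S, xs ∉ Sm P F1 ∧ Rnum P F1 = Finset.univ.sup fun y => dSteps P xs y := by
  have hne' : {r | ∃ x, x ∉ Sm P F1 ∧ r = Finset.univ.sup fun y => dSteps P x y}.Nonempty := by
    obtain ⟨x, hx⟩ := hne
    exact ⟨_, x, hx, rfl⟩
  obtain ⟨xs, hxs, heq⟩ := Nat.sInf_mem hne'
  exact ⟨xs, hxs, heq⟩

lemma reachIn_dSteps {P : S → S → ℝ} (hP : IsGenProb P) (x y : S) :
    ReachIn P (dSteps P x y) x y := by
  have hne : {n | ReachIn P n x y}.Nonempty := by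
    obtain ⟨n, -, z, hz0, hzn, hstep⟩ := hP.irreducible x y
    exact ⟨n, z, hz0, hzn, hstep⟩
  exact Nat.sInf_mem hne

lemma dSteps_pos {P : S → S → ℝ} (hP : IsGenProb P) {x y : S} (hxy : x ≠ y) :
    1 ≤ dSteps P x y := by
  by_contra h
  push_neg at h
  interval_cases hd : dSteps P x y
  · obtain ⟨f, h0, hn, -⟩ := reachIn_dSteps hP x y
    rw [hd] at hn
    exact hxy (h0 ▸ hn ▸ rfl)

lemma reachIn_symm {P : S → S → ℝ} (hP : IsGenProb P) {n : ℕ} {x y : S}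
    (h : ReachIn P n x y) : ReachIn P n y x := by
  obtain ⟨f, h0, hn, hstep⟩ := h
  refine ⟨fun k => f (n - k), by simp [hn], by simp [h0], ?_⟩
  intro k hk
  rw [hP.symm]
  have h1 : n - k = (n - (k + 1)) + 1 := by omega
  have h2 : n - (k + 1) < n := by omega
  have h3 := hstep (n - (k + 1)) h2
  rwa [← h1] at h3

lemma prodG_path_lb {G : ℕ → Matrix S S ℝ} (hG : ∀ t, IsStochastic (G t))
    {c : ℝ} (hc : 0 ≤ c) (s : ℕ) (f : ℕ → S) :
    ∀ n : ℕ, (∀ k, k < n → c ≤ G (s + k) (f (k + 1)) (f k)) →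
      c ^ n ≤ prodG G (s + n) s (f n) (f 0) := by
  intro n
  induction n with
  | zero =>
      intro _
      simp [prodG_self, Matrix.one_apply]
  | succ n ih =>
      intro hstep
      rw [show s + (n + 1) = (s + n) + 1 by omega, prodG_succ G (by omega)]
      have hmul : G (s + n) (f (n + 1)) (f n) * prodG G (s + n) s (f n) (f 0)
          ≤ (G (s + n) * prodG G (s + n) s) (f (n + 1)) (f 0) := by
        rw [Matrix.mul_apply]
        exact Finset.single_le_sum
          (f := fun z => G (s + n) (f (n + 1)) z * prodG G (s + n) s z (f 0))
          (fun z _ => mul_nonneg ((hG _).1 _ _) ((isStochastic_prodG hG _ _).1 _ _))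
          (Finset.mem_univ (f n))
      calc c ^ (n + 1) = c * c ^ n := by ring
      _ ≤ G (s + n) (f (n + 1)) (f n) * prodG G (s + n) s (f n) (f 0) :=
          mul_le_mul (hstep n (by omega)) (ih fun k hk => hstep k (by omega))
            (pow_nonneg hc n) ((hG _).1 _ _)
      _ ≤ _ := hmul

lemma g_ge {g : ℝ → ℝ} (hg : IsAcceptFn g) {u : ℝ} (hu : 0 < u) :
    g 1 * min u 1 ≤ g u := by
  rcases le_or_gt 1 u with h | h
  · rw [min_eq_right h, mul_one]
    exact hg.mono (Set.mem_Ici.2 zero_le_one) (Set.mem_Ici.2 (by linarith)) h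
  · rw [min_eq_left h.le]
    have hr := hg.ratio u hu
    have hmono : g 1 ≤ g (1 / u) := by
      apply hg.mono (Set.mem_Ici.2 zero_le_one) (Set.mem_Ici.2 (by positivity))
      rw [le_div_iff₀ hu]
      linarith
    have h2 : g u = g (1 / u) * u := by
      rw [hr]
      field_simp
    rw [h2]
    nlinarith

lemma g_le_self {g : ℝ → ℝ} (hg : IsAcceptFn g) {u : ℝ} (hu : 0 < u) (hu1 : u ≤ 1) :
    g u ≤ u := by
  have h := hg.ratio u hu
  have h2 : g u / u ≤ 1 := by
    rw [← h]
    exact (hg.maps (1 / u) (by positivity)).2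
  rwa [div_le_one hu] at h2

lemma dist1_prodG_stationary {G : ℕ → Matrix S S ℝ} (hG : ∀ t, IsStochastic (G t))
    {q : ℕ → S → ℝ} (hstat : ∀ t, (G t).mulVec (q t) = q t) {s : ℕ} :
    ∀ t, s ≤ t → dist1 ((prodG G t s).mulVec (q s)) (q t)
      ≤ ∑ k ∈ Finset.Ico s t, dist1 (q (k + 1)) (q k) := by
  intro t ht
  induction t, ht using Nat.le_induction with
  | base =>
      simp only [prodG_self, Matrix.one_mulVec, Finset.Ico_self, Finset.sum_empty]
      simp [dist1]
  | succ t ht ih =>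
      rw [Finset.sum_Ico_succ_top ht, prodG_succ G ht, ← Matrix.mulVec_mulVec]
      set X := (prodG G t s).mulVec (q s) with hX
      calc dist1 ((G t).mulVec X) (q (t + 1))
          ≤ dist1 ((G t).mulVec X) ((G t).mulVec (q t))
            + dist1 ((G t).mulVec (q t)) (q (t + 1)) := dist1_triangle _ _ _
      _ ≤ (∑ k ∈ Finset.Ico s t, dist1 (q (k + 1)) (q k)) + dist1 (q (t + 1)) (q t) := by
          apply add_le_add
          · calc dist1 ((G t).mulVec X) ((G t).mulVec (q t))
                = ∑ y, |(G t).mulVec (X - q t) y| := by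
                  unfold dist1
                  apply Finset.sum_congr rfl
                  intro y _
                  rw [Matrix.mulVec_sub]
                  rfl
            _ ≤ ∑ x, |(X - q t) x| := (hG t).abs_mulVec_le _
            _ = dist1 X (q t) := rfl
            _ ≤ _ := ih
          · rw [hstat t, dist1_comm]
      _ = _ := by ring

end Consts

set_option maxHeartbeats 1600000

/-- Theorem 3: strong ergodicity of QA-PIMC.  Under the annealing
schedule `T1(t) ≥ R L1 / log (t+2)` the chain is strongly ergodic, with limiting
distribution supported on the global minima of `F1`, where it is proportional to
`exp (-F0 x / T0)`. -/
theorem pimc_stronglyErgodic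
    {S : Type*} [Fintype S] [DecidableEq S] [Nonempty S]
    (P : S → S → ℝ) (hP : IsGenProb P)
    (g : ℝ → ℝ) (hg : IsAcceptFn g) (hg1 : 0 < g 1)
    (F0 F1 : S → ℝ) (T0 : ℝ) (hT0 : 0 < T0)
    (T1 : ℕ → ℝ) (hT1pos : ∀ t, 0 < T1 t) (hT1anti : Antitone T1)
    (hT1lim : Tendsto T1 atTop (nhds 0))
    (hne : ∃ x : S, x ∉ Sm P F1) (hL1 : 0 < Lmax P F1)
    (hsched : ∀ t : ℕ, T1 t ≥ (Rnum P F1 : ℝ) * Lmax P F1 / Real.log ((t : ℝ) + 2)) :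
    StronglyErgodicTo (Gpimc P g F0 F1 T0 T1) (rLimit F0 F1 T0) := by
  classical
  have hGs : ∀ t, IsStochastic (Gpimc P g F0 F1 T0 T1 t) :=
    fun t => gpimc_stochastic F0 F1 T0 T1 P g hP hg t
  have hstat : ∀ t, (Gpimc P g F0 F1 T0 T1 t).mulVec (qB F0 F1 T0 T1 t) = qB F0 F1 T0 T1 t :=
    fun t => qB_stationary F0 F1 T0 T1 P g hP hg t
  -- constants
  have hw : 0 < wmin P := wmin_pos (exists_edge hL1)
  set L0 : ℝ := max (Lmax P F0) 0 with hL0def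
  have hL0 : 0 ≤ L0 := le_max_right _ _
  obtain ⟨xs, hxs, hRdef⟩ := rnum_spec hne
  obtain ⟨y0, hy0P, hy0F⟩ := not_mem_Sm hxs
  have hdle : ∀ x : S, dSteps P xs x ≤ Rnum P F1 := by
    intro x
    rw [hRdef]
    exact Finset.le_sup (Finset.mem_univ x)
  have hR1 : 1 ≤ Rnum P F1 := by
    have h1 : xs ≠ y0 := by
      intro h
      rw [← h, hP.diag_zero] at hy0P
      exact lt_irrefl 0 hy0P
    calc 1 ≤ dSteps P xs y0 := dSteps_pos hP h1
    _ ≤ Rnum P F1 := hdle y0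
  set R : ℕ := Rnum P F1 with hRn
  have hβ := beta_tendsto T1 hT1pos hT1lim
  -- move step lower bound
  set c1m : ℝ := wmin P * g 1 * Real.exp (-(L0 / T0)) with hc1m
  have hc1m_pos : 0 < c1m := by positivity
  have hexp_le_one : ∀ u : ℕ, Real.exp (-(Lmax P F1 / T1 u)) ≤ 1 := by
    intro u
    rw [← Real.exp_zero]
    apply Real.exp_le_exp.2
    have := hT1pos u
    have h1 : 0 ≤ Lmax P F1 / T1 u := div_nonneg hL1.le (hT1pos u).le
    linarith
  have hmove : ∀ u : ℕ, ∀ z z' : S, 0 < P z' z →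
      c1m * Real.exp (-(Lmax P F1 / T1 u)) ≤ Gpimc P g F0 F1 T0 T1 u z' z := by
    intro u z z' hzz
    have hz : z' ≠ z := by
      intro h
      rw [h, hP.diag_zero] at hzz
      exact lt_irrefl 0 hzz
    rw [gpimc_apply, if_neg hz, qB_ratio]
    set ratio : ℝ := Real.exp (-(F0 z' - F0 z) / T0 - (F1 z' - F1 z) / T1 u) with hratio
    have hratio_pos : (0 : ℝ) < ratio := Real.exp_pos _
    have hbound : Real.exp (-(L0 / T0)) * Real.exp (-(Lmax P F1 / T1 u)) ≤ ratio := by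
      rw [← Real.exp_add]
      apply Real.exp_le_exp.2
      have h1 : F0 z' - F0 z ≤ L0 := by
        have := le_Lmax P F0 hzz
        have h2 : F0 z' - F0 z ≤ |F0 z - F0 z'| := by
          rw [abs_sub_comm]
          exact le_abs_self _
        calc F0 z' - F0 z ≤ Lmax P F0 := le_trans h2 this
        _ ≤ L0 := le_max_left _ _
      have h2 : F1 z' - F1 z ≤ Lmax P F1 := by
        have := le_Lmax P F1 hzz
        have h3 : F1 z' - F1 z ≤ |F1 z - F1 z'| := by
          rw [abs_sub_comm]
          exact le_abs_self _
        linarith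
      have h3 : (F0 z' - F0 z) / T0 ≤ L0 / T0 := by gcongr
      have h4 : (F1 z' - F1 z) / T1 u ≤ Lmax P F1 / T1 u := by
        have := hT1pos u
        gcongr
      have h5 : -(F0 z' - F0 z) / T0 = -((F0 z' - F0 z) / T0) := neg_div _ _
      linarith
    have hexpL0 : Real.exp (-(L0 / T0)) ≤ 1 := by
      rw [← Real.exp_zero]
      apply Real.exp_le_exp.2
      have h1 : 0 ≤ L0 / T0 := div_nonneg hL0 hT0.le
      linarith
    calc c1m * Real.exp (-(Lmax P F1 / T1 u))
        = wmin P * (g 1 * (Real.exp (-(L0 / T0)) * Real.exp (-(Lmax P F1 / T1 u)))) := by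
          rw [hc1m]; ring
    _ ≤ wmin P * (g 1 * min ratio 1) := by
        apply mul_le_mul_of_nonneg_left _ hw.le
        apply mul_le_mul_of_nonneg_left _ hg1.le
        apply le_min hbound
        calc Real.exp (-(L0 / T0)) * Real.exp (-(Lmax P F1 / T1 u))
            ≤ 1 * 1 := mul_le_mul hexpL0 (hexp_le_one u) (Real.exp_pos _).le zero_le_one
        _ = 1 := mul_one 1
    _ ≤ wmin P * g ratio := mul_le_mul_of_nonneg_left (g_ge hg hratio_pos) hw.le
    _ ≤ P z' z * g ratio :=
        mul_le_mul_of_nonneg_right (wmin_le P hzz) (hg.maps _ hratio_pos.le).1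
  -- loop step lower bound, eventually
  set cl : ℝ := P y0 xs / 2 with hcl
  have hcl_pos : 0 < cl := by
    rw [hcl]; linarith
  have hratio0 : Tendsto
      (fun u => Real.exp (-(F0 y0 - F0 xs) / T0 - (F1 y0 - F1 xs) / T1 u)) atTop (nhds 0) := by
    have harg : Tendsto
        (fun u : ℕ => -(F0 y0 - F0 xs) / T0 + -(F1 y0 - F1 xs) * (T1 u)⁻¹) atTop atBot := by
      apply Filter.tendsto_atBot_add_const_left
      exact Tendsto.const_mul_atTop_of_neg (by linarith) hβ
    have h2 := Real.tendsto_exp_atBot.comp harg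
    apply h2.congr
    intro u
    simp only [Function.comp_apply]
    congr 1
    rw [div_eq_mul_inv (F1 y0 - F1 xs) (T1 u)]
    ring
  obtain ⟨tstar, hts⟩ := Filter.eventually_atTop.1
    (Filter.Tendsto.eventually_lt_const (by norm_num : (0 : ℝ) < 1 / 2) hratio0)
  have hloop : ∀ u, tstar ≤ u → cl ≤ Gpimc P g F0 F1 T0 T1 u xs xs := by
    intro u hu
    rw [gpimc_apply, if_pos rfl]
    have hA_le : ∀ z : S, g (qB F0 F1 T0 T1 u z / qB F0 F1 T0 T1 u xs) ≤ 1 := fun z =>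
      (hg.maps _ (div_pos (qB_pos F0 F1 T0 T1 u z) (qB_pos F0 F1 T0 T1 u xs)).le).2
    have hA_nn : ∀ z : S, 0 ≤ g (qB F0 F1 T0 T1 u z / qB F0 F1 T0 T1 u xs) := fun z =>
      (hg.maps _ (div_pos (qB_pos F0 F1 T0 T1 u z) (qB_pos F0 F1 T0 T1 u xs)).le).1
    have hAy0 : g (qB F0 F1 T0 T1 u y0 / qB F0 F1 T0 T1 u xs) ≤ 1 / 2 := by
      rw [qB_ratio]
      have h0 := hts u hu
      exact le_trans (g_le_self hg (Real.exp_pos _) (by linarith)) (by linarith)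
    have hsum : ∑ z, P z xs * g (qB F0 F1 T0 T1 u z / qB F0 F1 T0 T1 u xs) ≤ 1 - cl := by
      rw [← Finset.add_sum_erase _ _ (Finset.mem_univ y0)]
      have h1 : ∑ z ∈ Finset.univ.erase y0,
          P z xs * g (qB F0 F1 T0 T1 u z / qB F0 F1 T0 T1 u xs)
            ≤ ∑ z ∈ Finset.univ.erase y0, P z xs := by
        apply Finset.sum_le_sum
        intro z _
        calc P z xs * g (qB F0 F1 T0 T1 u z / qB F0 F1 T0 T1 u xs) ≤ P z xs * 1 :=
              mul_le_mul_of_nonneg_left (hA_le z) (hP.nonneg xs z)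
        _ = P z xs := mul_one _
      have h2 : ∑ z ∈ Finset.univ.erase y0, P z xs = 1 - P y0 xs := by
        rw [Finset.sum_erase_eq_sub (Finset.mem_univ y0), hP.sum_one]
      have h3 : P y0 xs * g (qB F0 F1 T0 T1 u y0 / qB F0 F1 T0 T1 u xs)
          ≤ P y0 xs * (1 / 2) := mul_le_mul_of_nonneg_left hAy0 (hP.nonneg xs y0)
      rw [h2] at h1
      rw [hcl]
      linarith
    linarith
  -- uniform per-step bound and block bound
  set c1 : ℝ := min cl c1m with hc1def
  have hc1_pos : 0 < c1 := lt_min hcl_pos hc1m_pos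
  have hE1 : ∀ u k : ℕ, u ≤ k →
      Real.exp (-(Lmax P F1 / T1 k)) ≤ Real.exp (-(Lmax P F1 / T1 u)) := by
    intro u k huk
    apply Real.exp_le_exp.2
    have h1 : T1 k ≤ T1 u := hT1anti huk
    have h2 : Lmax P F1 / T1 u ≤ Lmax P F1 / T1 k := by
      have := hT1pos k
      gcongr
    linarith
  have hblock : ∀ s, tstar ≤ s → ∀ x : S,
      c1 ^ R * Real.exp (-((R : ℝ) * Lmax P F1 / T1 (s + R - 1)))
        ≤ prodG (Gpimc P g F0 F1 T0 T1) (s + R) s xs x := by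
    intro s hs x
    obtain ⟨f, hf0, hfd, hfstep⟩ := reachIn_symm hP (reachIn_dSteps hP xs x)
    set d := dSteps P xs x with hd
    set fp : ℕ → S := fun k => if k < d then f k else xs with hfp
    have hfp_eq : ∀ k, k ≤ d → fp k = f k := by
      intro k hk
      rcases lt_or_eq_of_le hk with h | h
      · simp [hfp, h]
      · subst h
        simp only [hfp, lt_irrefl, if_neg (lt_irrefl d)]
        -- careful: f (d - d)?? no: hfd is about the reversed path
        rw [hfd]
    have hfp0 : fp 0 = x := by
      rw [hfp_eq 0 (Nat.zero_le d), hf0]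
    have hfpR : fp R = xs := by
      by_cases h : R < d
      · exact absurd h (not_lt.2 (hdle x))
      · simp [hfp, h]
    have hstepk : ∀ k, k < R → c1 * Real.exp (-(Lmax P F1 / T1 (s + R - 1)))
        ≤ Gpimc P g F0 F1 T0 T1 (s + k) (fp (k + 1)) (fp k) := by
      intro k hk
      have hTk : Real.exp (-(Lmax P F1 / T1 (s + R - 1)))
          ≤ Real.exp (-(Lmax P F1 / T1 (s + k))) := hE1 (s + k) (s + R - 1) (by omega)
      by_cases hkd : k < d
      · have hedge : 0 < P (fp (k + 1)) (fp k) := by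
          rw [hfp_eq k hkd.le, hfp_eq (k + 1) hkd]
          exact hfstep k hkd
        calc c1 * Real.exp (-(Lmax P F1 / T1 (s + R - 1)))
            ≤ c1m * Real.exp (-(Lmax P F1 / T1 (s + k))) :=
              mul_le_mul (min_le_right _ _) hTk (Real.exp_pos _).le hc1m_pos.le
        _ ≤ _ := hmove (s + k) (fp k) (fp (k + 1)) hedge
      · have hxk : fp k = xs := by simp [hfp, hkd]
        have hxk1 : fp (k + 1) = xs := by
          have : ¬ (k + 1 < d) := by omega
          simp [hfp, this]
        rw [hxk, hxk1]
        calc c1 * Real.exp (-(Lmax P F1 / T1 (s + R - 1)))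
            ≤ c1 * 1 := mul_le_mul_of_nonneg_left (hexp_le_one _) hc1_pos.le
        _ = c1 := mul_one _
        _ ≤ cl := min_le_left _ _
        _ ≤ _ := hloop (s + k) (by omega)
    have hlb := prodG_path_lb hGs
      (mul_nonneg hc1_pos.le (Real.exp_pos _).le) s fp R hstepk
    rw [hfp0, hfpR] at hlb
    calc c1 ^ R * Real.exp (-((R : ℝ) * Lmax P F1 / T1 (s + R - 1)))
        = (c1 * Real.exp (-(Lmax P F1 / T1 (s + R - 1)))) ^ R := by
          rw [mul_pow, ← Real.exp_nat_mul]
          congr 2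
          ring
    _ ≤ _ := hlb
  -- the per-block contraction coefficient
  set δ' : ℕ → ℝ := fun s => c1 ^ R * ((s : ℝ) + R + 1)⁻¹ with hδ'def
  have hδ'_nonneg : ∀ s : ℕ, 0 ≤ δ' s := by
    intro s
    apply mul_nonneg (pow_nonneg hc1_pos.le R)
    have : (0 : ℝ) < (s : ℝ) + R + 1 := by positivity
    positivity
  have hδ_ge : ∀ s : ℕ, ((s : ℝ) + R + 1)⁻¹
      ≤ Real.exp (-((R : ℝ) * Lmax P F1 / T1 (s + R - 1))) := by
    intro s
    have hcast : ((s + R - 1 : ℕ) : ℝ) = (s : ℝ) + (R : ℝ) - 1 := by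
      have h1 : 1 ≤ s + R := by omega
      rw [Nat.cast_sub h1, Nat.cast_add, Nat.cast_one]
    have hR1' : (1 : ℝ) ≤ (R : ℝ) := by exact_mod_cast hR1
    have hspos : (0 : ℝ) < (s : ℝ) + R + 1 := by positivity
    have hlog : 0 < Real.log ((s : ℝ) + R + 1) := by
      apply Real.log_pos
      have : (0 : ℝ) ≤ (s : ℝ) := Nat.cast_nonneg s
      linarith
    have hsched' := hsched (s + R - 1)
    rw [hcast] at hsched'
    have harg : (s : ℝ) + (R : ℝ) - 1 + 2 = (s : ℝ) + R + 1 := by ring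
    rw [harg] at hsched'
    have h1 : (R : ℝ) * Lmax P F1 / T1 (s + R - 1) ≤ Real.log ((s : ℝ) + R + 1) := by
      rw [ge_iff_le, div_le_iff₀ hlog] at hsched'
      rw [div_le_iff₀ (hT1pos (s + R - 1))]
      nlinarith [hT1pos (s + R - 1)]
    calc ((s : ℝ) + R + 1)⁻¹ = Real.exp (-(Real.log ((s : ℝ) + R + 1))) := by
          rw [Real.exp_neg, Real.exp_log hspos]
    _ ≤ _ := Real.exp_le_exp.2 (by linarith)
  have hδfull : ∀ s, tstar ≤ s → ∀ x : S,
      δ' s ≤ prodG (Gpimc P g F0 F1 T0 T1) (s + R) s xs x := by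
    intro s hs x
    calc δ' s ≤ c1 ^ R * Real.exp (-((R : ℝ) * Lmax P F1 / T1 (s + R - 1))) :=
          mul_le_mul_of_nonneg_left (hδ_ge s) (pow_nonneg hc1_pos.le R)
    _ ≤ _ := hblock s hs x
  have hδ'_le_one : ∀ s, tstar ≤ s → δ' s ≤ 1 := fun s hs =>
    le_trans (hδfull s hs xs) ((isStochastic_prodG hGs _ _).entry_le_one xs xs)
  have hcontract : ∀ s, tstar ≤ s → ∀ v : S → ℝ, (∑ x, v x = 0) →
      ∑ y, |(prodG (Gpimc P g F0 F1 T0 T1) (s + R) s).mulVec v y|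
        ≤ (1 - δ' s) * ∑ x, |v x| := fun s hs v hv =>
    (isStochastic_prodG hGs _ _).contract xs (hδ'_nonneg s) (hδfull s hs) hv
  -- iterate over K blocks
  have hiter : ∀ a : ℕ, tstar ≤ a → ∀ K : ℕ, ∀ v : S → ℝ, (∑ x, v x = 0) →
      ∑ y, |(prodG (Gpimc P g F0 F1 T0 T1) (a + K * R) a).mulVec v y|
        ≤ (∏ k ∈ Finset.range K, (1 - δ' (a + k * R))) * ∑ x, |v x| := by
    intro a ha K
    induction K with
    | zero =>
        intro v hv
        simp [prodG_self, Matrix.one_mulVec]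
    | succ K ih =>
        intro v hv
        have e : a + (K + 1) * R = (a + K * R) + R := by ring
        rw [e, ← prodG_comp (Gpimc P g F0 F1 T0 T1) (Nat.le_add_right a (K * R))
          (Nat.le_add_right _ R), ← Matrix.mulVec_mulVec]
        have hw : ∑ x, (prodG (Gpimc P g F0 F1 T0 T1) (a + K * R) a).mulVec v x = 0 := by
          rw [(isStochastic_prodG hGs _ _).sum_mulVec, hv]
        have h1 := hcontract (a + K * R) (by omega) _ hw
        have h2 := ih v hv
        have h3 : 0 ≤ 1 - δ' (a + K * R) := by
          have := hδ'_le_one (a + K * R) (by omega)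
          linarith
        calc ∑ y, |(prodG (Gpimc P g F0 F1 T0 T1) ((a + K * R) + R) (a + K * R)).mulVec
              ((prodG (Gpimc P g F0 F1 T0 T1) (a + K * R) a).mulVec v) y|
            ≤ (1 - δ' (a + K * R)) *
              ∑ x, |(prodG (Gpimc P g F0 F1 T0 T1) (a + K * R) a).mulVec v x| := h1
        _ ≤ (1 - δ' (a + K * R)) *
              ((∏ k ∈ Finset.range K, (1 - δ' (a + k * R))) * ∑ x, |v x|) :=
            mul_le_mul_of_nonneg_left h2 h3
        _ = _ := by rw [Finset.prod_range_succ]; ring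
  -- the block products tend to zero
  have hprod0 : ∀ a : ℕ, tstar ≤ a →
      Tendsto (fun K => ∏ k ∈ Finset.range K, (1 - δ' (a + k * R))) atTop (nhds 0) := by
    intro a ha
    set c2 : ℝ := c1 ^ R / ((a : ℝ) + R + 1) with hc2
    have hc2_pos : 0 < c2 := by
      apply div_pos (pow_pos hc1_pos R)
      positivity
    have hfac_nonneg : ∀ k : ℕ, 0 ≤ 1 - δ' (a + k * R) := by
      intro k
      have := hδ'_le_one (a + k * R) (by omega)
      linarith
    apply squeeze_zero (g := fun K => Real.exp (-(c2 * ∑ k ∈ Finset.range K, 1 / ((k : ℝ) + 1))))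
    · intro K
      exact Finset.prod_nonneg fun k _ => hfac_nonneg k
    · intro K
      have hperk : ∀ k ∈ Finset.range K, c2 * (1 / ((k : ℝ) + 1)) ≤ δ' (a + k * R) := by
        intro k _
        have hcast : ((a + k * R : ℕ) : ℝ) = (a : ℝ) + (k : ℝ) * R := by push_cast; ring
        have hR1' : (1 : ℝ) ≤ (R : ℝ) := by exact_mod_cast hR1
        have ha0 : (0 : ℝ) ≤ (a : ℝ) := Nat.cast_nonneg a
        have hk0 : (0 : ℝ) ≤ (k : ℝ) := Nat.cast_nonneg k
        have hdpos : (0 : ℝ) < (a : ℝ) + (k : ℝ) * R + R + 1 := by nlinarith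
        have hineq : (a : ℝ) + (k : ℝ) * R + R + 1 ≤ ((a : ℝ) + R + 1) * ((k : ℝ) + 1) := by
          nlinarith
        have hinv : (((a : ℝ) + R + 1) * ((k : ℝ) + 1))⁻¹
            ≤ ((a : ℝ) + (k : ℝ) * R + R + 1)⁻¹ := by
          apply inv_anti₀ hdpos hineq
        have heq : c2 * (1 / ((k : ℝ) + 1))
            = c1 ^ R * (((a : ℝ) + R + 1) * ((k : ℝ) + 1))⁻¹ := by
          rw [hc2]
          field_simp
        have hgoal : δ' (a + k * R) = c1 ^ R * (((a + k * R : ℕ) : ℝ) + R + 1)⁻¹ := rfl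
        rw [heq, hgoal, hcast]
        exact mul_le_mul_of_nonneg_left hinv (pow_nonneg hc1_pos.le R)
      calc ∏ k ∈ Finset.range K, (1 - δ' (a + k * R))
          ≤ ∏ k ∈ Finset.range K, Real.exp (-(δ' (a + k * R))) := by
            apply Finset.prod_le_prod (fun k _ => hfac_nonneg k)
            intro k _
            have := Real.add_one_le_exp (-(δ' (a + k * R)))
            linarith
      _ = Real.exp (∑ k ∈ Finset.range K, -(δ' (a + k * R))) := (Real.exp_sum _ _).symm
      _ ≤ Real.exp (-(c2 * ∑ k ∈ Finset.range K, 1 / ((k : ℝ) + 1))) := by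
          apply Real.exp_le_exp.2
          rw [Finset.mul_sum, ← Finset.sum_neg_distrib]
          apply Finset.sum_le_sum
          intro k hk
          have := hperk k hk
          linarith
    · have hH := Real.tendsto_sum_range_one_div_nat_succ_atTop
      have h1 : Tendsto (fun K => c2 * ∑ k ∈ Finset.range K, 1 / ((k : ℝ) + 1))
          atTop atTop := Tendsto.const_mul_atTop hc2_pos hH
      have h2 : Tendsto (fun K => -(c2 * ∑ k ∈ Finset.range K, 1 / ((k : ℝ) + 1)))
          atTop atBot := by
        rw [Filter.tendsto_neg_atBot_iff]
        exact h1
      exact Real.tendsto_exp_atBot.comp h2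
  -- final assembly
  intro t0 ε hε
  obtain ⟨Tstar2, hTsum⟩ := sum_dist1_qB F0 F1 T0 T1 hT1pos hT1anti hT1lim
  have hqr := dist1_qB_tendsto F0 F1 T0 T1 hT1pos hT1lim
  obtain ⟨Tr, hTr⟩ := Filter.eventually_atTop.1
    (Filter.Tendsto.eventually_lt_const (by linarith : (0 : ℝ) < ε / 6) hqr)
  set s1 : ℕ := max (max t0 tstar) (max Tstar2 Tr) with hs1
  have hs1_t0 : t0 ≤ s1 := le_trans (le_max_left _ _) (le_max_left _ _)
  have hs1_ts : tstar ≤ s1 := le_trans (le_max_right _ _) (le_max_left _ _)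
  have hs1_T2 : Tstar2 ≤ s1 := le_trans (le_max_left _ _) (le_max_right _ _)
  have hs1_Tr : Tr ≤ s1 := le_trans (le_max_right _ _) (le_max_right _ _)
  obtain ⟨K, hK⟩ := (Filter.Tendsto.eventually_lt_const
    (by linarith : (0 : ℝ) < ε / 6) (hprod0 s1 hs1_ts)).exists
  refine ⟨s1 + K * R, fun t ht p0 hp0 => ?_⟩
  have hs1KR : s1 ≤ s1 + K * R := Nat.le_add_right _ _
  have hs1t : s1 ≤ t := le_trans hs1KR ht
  set v1 : S → ℝ := (prodG (Gpimc P g F0 F1 T0 T1) s1 t0).mulVec p0 with hv1def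
  have hv1 : IsProbVec v1 := (isStochastic_prodG hGs s1 t0).isProbVec_mulVec hp0
  have hq1 : IsProbVec (qB F0 F1 T0 T1 s1) := qB_isProbVec F0 F1 T0 T1 s1
  have hA : dist1 ((prodG (Gpimc P g F0 F1 T0 T1) t s1).mulVec v1)
      ((prodG (Gpimc P g F0 F1 T0 T1) t s1).mulVec (qB F0 F1 T0 T1 s1)) ≤ ε / 3 := by
    have hsum0 : ∑ x, (v1 - qB F0 F1 T0 T1 s1) x = 0 := by
      simp only [Pi.sub_apply]
      rw [Finset.sum_sub_distrib, hv1.2, hq1.2, sub_self]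
    have hd : dist1 ((prodG (Gpimc P g F0 F1 T0 T1) t s1).mulVec v1)
        ((prodG (Gpimc P g F0 F1 T0 T1) t s1).mulVec (qB F0 F1 T0 T1 s1))
        = ∑ y, |(prodG (Gpimc P g F0 F1 T0 T1) t s1).mulVec (v1 - qB F0 F1 T0 T1 s1) y| := by
      unfold dist1
      apply Finset.sum_congr rfl
      intro y _
      rw [Matrix.mulVec_sub]
      rfl
    rw [hd, ← prodG_comp (Gpimc P g F0 F1 T0 T1) hs1KR ht, ← Matrix.mulVec_mulVec]
    calc ∑ y, |(prodG (Gpimc P g F0 F1 T0 T1) t (s1 + K * R)).mulVec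
          ((prodG (Gpimc P g F0 F1 T0 T1) (s1 + K * R) s1).mulVec
            (v1 - qB F0 F1 T0 T1 s1)) y|
        ≤ ∑ y, |(prodG (Gpimc P g F0 F1 T0 T1) (s1 + K * R) s1).mulVec
            (v1 - qB F0 F1 T0 T1 s1) y| := (isStochastic_prodG hGs _ _).abs_mulVec_le _
    _ ≤ (∏ k ∈ Finset.range K, (1 - δ' (s1 + k * R))) *
          ∑ x, |(v1 - qB F0 F1 T0 T1 s1) x| := hiter s1 hs1_ts K _ hsum0
    _ ≤ (ε / 6) * 2 := by
        apply mul_le_mul hK.le _ (Finset.sum_nonneg fun x _ => abs_nonneg _) (by linarith)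
        have : ∑ x, |(v1 - qB F0 F1 T0 T1 s1) x| = dist1 v1 (qB F0 F1 T0 T1 s1) := by
          unfold dist1
          apply Finset.sum_congr rfl
          intro x _
          rfl
        rw [this]
        exact dist1_le_two hv1 hq1
    _ = ε / 3 := by ring
  have hB : dist1 ((prodG (Gpimc P g F0 F1 T0 T1) t s1).mulVec (qB F0 F1 T0 T1 s1))
      (rLimit F0 F1 T0) ≤ ε / 2 := by
    have htr_t : dist1 (qB F0 F1 T0 T1 t) (rLimit F0 F1 T0) < ε / 6 :=
      hTr t (le_trans hs1_Tr hs1t)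
    have htr_s1 : dist1 (qB F0 F1 T0 T1 s1) (rLimit F0 F1 T0) < ε / 6 := hTr s1 hs1_Tr
    have hb1 : dist1 ((prodG (Gpimc P g F0 F1 T0 T1) t s1).mulVec (qB F0 F1 T0 T1 s1))
        (qB F0 F1 T0 T1 t)
        ≤ ∑ k ∈ Finset.Ico s1 t, dist1 (qB F0 F1 T0 T1 (k + 1)) (qB F0 F1 T0 T1 k) :=
      dist1_prodG_stationary hGs hstat t hs1t
    rw [hTsum s1 t hs1_T2 hs1t] at hb1
    have hb3 : dist1 (qB F0 F1 T0 T1 t) (qB F0 F1 T0 T1 s1)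
        ≤ dist1 (qB F0 F1 T0 T1 t) (rLimit F0 F1 T0)
          + dist1 (rLimit F0 F1 T0) (qB F0 F1 T0 T1 s1) := dist1_triangle _ _ _
    have hb4 : dist1 (rLimit F0 F1 T0) (qB F0 F1 T0 T1 s1)
        = dist1 (qB F0 F1 T0 T1 s1) (rLimit F0 F1 T0) := dist1_comm _ _
    have hb5 := dist1_triangle
      ((prodG (Gpimc P g F0 F1 T0 T1) t s1).mulVec (qB F0 F1 T0 T1 s1))
      (qB F0 F1 T0 T1 t) (rLimit F0 F1 T0)
    linarith
  calc dist1 ((prodG (Gpimc P g F0 F1 T0 T1) t t0).mulVec p0) (rLimit F0 F1 T0)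
      = dist1 ((prodG (Gpimc P g F0 F1 T0 T1) t s1).mulVec v1) (rLimit F0 F1 T0) := by
        rw [hv1def, Matrix.mulVec_mulVec, prodG_comp (Gpimc P g F0 F1 T0 T1) hs1_t0 hs1t]
  _ ≤ dist1 ((prodG (Gpimc P g F0 F1 T0 T1) t s1).mulVec v1)
        ((prodG (Gpimc P g F0 F1 T0 T1) t s1).mulVec (qB F0 F1 T0 T1 s1))
      + dist1 ((prodG (Gpimc P g F0 F1 T0 T1) t s1).mulVec (qB F0 F1 T0 T1 s1))
        (rLimit F0 F1 T0) := dist1_triangle _ _ _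
  _ ≤ ε / 3 + ε / 2 := add_le_add hA hB
  _ ≤ ε := by linarith

end QAPaper
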